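/- Let (α, 𝒜, μ) and (β, ℬ, ν) be nonzero finite measure spaces and let f : α × β → [0,∞) be measurable with ∫ f d(μ×ν) = 1. Define the marginal f_X(x) := ∫ f(x,y) dν(y). Then for every τ > 0 there exist K ∈ ℕ, a measurable partition A_1, …, A_K of α, and measurable functions q_1, …, q_K : β → [0,∞) with ∫ q_i dν = 1 for each i, such that ∫ | (∑_{i=1}^K 1_{A_i}(x) q_i(y)) · f_X(x) − f(x,y) | d(μ×ν)(x,y) < τ. -/

import Mathlib

open MeasureTheory Set Function

section Aux

variable {α β : Type*} [MeasurableSpace α] [MeasurableSpace β]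

/-- Collapse of a sum of indicators over a pairwise disjoint family. -/
lemma sum_indicator_part {ι : Type*} [Fintype ι] {A : ι → Set α}
    (hdis : Pairwise (Disjoint on A)) {x : α} {i₀ : ι} (hx : x ∈ A i₀) (g : ι → ℝ) :
    ∑ i, (A i).indicator (fun _ => g i) x = g i₀ := by
  rw [Finset.sum_eq_single i₀]
  · exact Set.indicator_of_mem hx _
  · intro i _ hne
    exact Set.indicator_of_notMem (fun hxi => (hdis hne).le_bot ⟨hxi, hx⟩) _
  · simp

/-- `XSet S` : `S` is a finite union of rectangles whose bases form a finite
measurable partition of `α`. -/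
def XSet (S : Set (α × β)) : Prop :=
  ∃ (n : ℕ) (A : Fin n → Set α) (B : Fin n → Set β),
    (∀ i, MeasurableSet (A i)) ∧ (∀ i, MeasurableSet (B i)) ∧
    Pairwise (Disjoint on A) ∧ (⋃ i, A i) = Set.univ ∧ S = ⋃ i, (A i) ×ˢ (B i)

lemma xSet_of_fintype {ι : Type*} [Fintype ι] (A : ι → Set α) (B : ι → Set β)
    (hA : ∀ i, MeasurableSet (A i)) (hB : ∀ i, MeasurableSet (B i))
    (hdis : Pairwise (Disjoint on A)) (hcov : (⋃ i, A i) = Set.univ) :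
    XSet (⋃ i, (A i) ×ˢ (B i)) := by
  let e := Fintype.equivFin ι
  refine ⟨Fintype.card ι, A ∘ e.symm, B ∘ e.symm, fun i => hA _, fun i => hB _,
    fun i j hij => hdis (e.symm.injective.ne hij), ?_, ?_⟩
  · rw [show (⋃ i, (A ∘ e.symm) i) = ⋃ i, A (e.symm i) from rfl,
      e.symm.surjective.iUnion_comp (fun i => A i)]; exact hcov
  · exact (e.symm.surjective.iUnion_comp (fun i => (A i) ×ˢ (B i))).symm

lemma mem_iUnion_prod_iff {ι : Type*} {A : ι → Set α} {B : ι → Set β}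
    (hdis : Pairwise (Disjoint on A)) {x : α} {y : β} {i₀ : ι} (hx : x ∈ A i₀) :
    (x, y) ∈ ⋃ i, (A i) ×ˢ (B i) ↔ y ∈ B i₀ := by
  constructor
  · intro h
    rw [Set.mem_iUnion] at h
    obtain ⟨i, hxi, hyi⟩ := h
    rcases eq_or_ne i i₀ with rfl | hne
    · exact hyi
    · exact ((hdis hne).le_bot ⟨hxi, hx⟩).elim
  · intro hy; exact Set.mem_iUnion.2 ⟨i₀, hx, hy⟩

lemma exists_mem_part {ι : Type*} {A : ι → Set α} (hcov : (⋃ i, A i) = Set.univ) (x : α) :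
    ∃ i, x ∈ A i := by
  have : x ∈ ⋃ i, A i := hcov ▸ Set.mem_univ x
  exact Set.mem_iUnion.1 this

lemma isSetAlgebra_xSet : IsSetAlgebra {S : Set (α × β) | XSet S} where
  empty_mem := by
    refine ⟨1, fun _ => Set.univ, fun _ => ∅, fun _ => MeasurableSet.univ,
      fun _ => MeasurableSet.empty, Subsingleton.pairwise, by simp [Set.iUnion_const], by simp⟩
  compl_mem := by
    rintro S ⟨n, A, B, hA, hB, hdis, hcov, rfl⟩
    refine ⟨n, A, fun i => (B i)ᶜ, hA, fun i => (hB i).compl, hdis, hcov, ?_⟩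
    ext ⟨x, y⟩
    obtain ⟨i₀, hx⟩ := exists_mem_part hcov x
    rw [Set.mem_compl_iff, mem_iUnion_prod_iff hdis hx, mem_iUnion_prod_iff hdis hx,
      Set.mem_compl_iff]
  union_mem := by
    rintro S T ⟨n, A, B, hA, hB, hdis, hcov, rfl⟩ ⟨m, A', B', hA', hB', hdis', hcov', rfl⟩
    have hdis'' : Pairwise (Disjoint on fun ij : Fin n × Fin m => A ij.1 ∩ A' ij.2) := by
      rintro ⟨i, j⟩ ⟨k, l⟩ hne
      rcases eq_or_ne i k with rfl | hik
      · have hjl : j ≠ l := fun h => hne (by simp [h])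
        exact ((hdis' hjl).mono inf_le_right inf_le_right : _)
      · exact ((hdis hik).mono inf_le_left inf_le_left : _)
    have hcov'' : (⋃ ij : Fin n × Fin m, A ij.1 ∩ A' ij.2) = Set.univ := by
      ext x
      obtain ⟨i₀, hx⟩ := exists_mem_part hcov x
      obtain ⟨j₀, hx'⟩ := exists_mem_part hcov' x
      simp only [Set.mem_iUnion, Set.mem_univ, iff_true]
      exact ⟨⟨i₀, j₀⟩, hx, hx'⟩
    have key : ((⋃ i, (A i) ×ˢ (B i)) ∪ ⋃ j, (A' j) ×ˢ (B' j))
        = ⋃ ij : Fin n × Fin m, (A ij.1 ∩ A' ij.2) ×ˢ (B ij.1 ∪ B' ij.2) := by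
      ext ⟨x, y⟩
      obtain ⟨i₀, hx⟩ := exists_mem_part hcov x
      obtain ⟨j₀, hx'⟩ := exists_mem_part hcov' x
      have hx'' : x ∈ A i₀ ∩ A' j₀ := ⟨hx, hx'⟩
      rw [Set.mem_union, mem_iUnion_prod_iff hdis hx, mem_iUnion_prod_iff hdis' hx',
        mem_iUnion_prod_iff hdis'' (i₀ := (i₀, j₀)) hx'']
      exact (Set.mem_union y _ _).symm
    rw [key]
    exact xSet_of_fintype _ _ (fun ij => (hA ij.1).inter (hA' ij.2))
      (fun ij => (hB ij.1).union (hB' ij.2)) hdis'' hcov''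

lemma generateFrom_xSet :
    MeasurableSpace.generateFrom {S : Set (α × β) | XSet S} = Prod.instMeasurableSpace := by
  apply le_antisymm
  · refine MeasurableSpace.generateFrom_le ?_
    rintro S ⟨n, A, B, hA, hB, -, -, rfl⟩
    exact MeasurableSet.iUnion fun i => (hA i).prod (hB i)
  · rw [← generateFrom_prod]
    apply MeasurableSpace.generateFrom_mono
    rintro S ⟨s, hs, t, ht, rfl⟩
    rw [Set.mem_setOf_eq] at hs ht
    have key : s ×ˢ t = ⋃ b : Bool, (if b then s else sᶜ) ×ˢ (if b then t else (∅ : Set β)) := by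
      ext ⟨x, y⟩
      simp [Set.mem_iUnion, Bool.exists_bool]
    show XSet (s ×ˢ t)
    rw [key]
    refine xSet_of_fintype _ _ (fun b => by cases b <;> simp [hs, hs.compl])
      (fun b => by cases b <;> simp [ht]) ?_ ?_
    · rintro a b hne
      cases a <;> cases b <;> simp_all [Function.onFun, disjoint_compl_right,
        disjoint_compl_left]
    · ext x; simp [Bool.exists_bool, em, or_comm]

lemma xSet_approx (μ : Measure α) (ν : Measure β) [IsFiniteMeasure μ] [IsFiniteMeasure ν]
    {S : Set (α × β)} (hS : MeasurableSet S) {ε : ℝ} (hε : 0 < ε) :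
    ∃ T, XSet T ∧ ((μ.prod ν) (symmDiff S T)).toReal < ε := by
  have hd := Measure.MeasureDense.of_generateFrom_isSetAlgebra_finite (μ := μ.prod ν)
    isSetAlgebra_xSet generateFrom_xSet.symm
  obtain ⟨T, hT, hlt⟩ := hd.approx S hS (measure_ne_top _ _) ε hε
  exact ⟨T, hT, ENNReal.toReal_lt_of_lt_ofReal hlt⟩

end Aux
section PC

variable {α β : Type*} [MeasurableSpace α] [MeasurableSpace β]

/-- `G` is piecewise (in `x`) of the form `∑ i, 1_{A i}(x) hᵢ(y)` with a finite measurable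
partition `A` and `ν`-integrable measurable functions `hᵢ`. -/
def IsPC (ν : Measure β) (G : α × β → ℝ) : Prop :=
  ∃ (n : ℕ) (A : Fin n → Set α) (h : Fin n → β → ℝ),
    (∀ i, MeasurableSet (A i)) ∧ Pairwise (Disjoint on A) ∧ (⋃ i, A i) = Set.univ ∧
    (∀ i, Measurable (h i)) ∧ (∀ i, Integrable (h i) ν) ∧
    ∀ p : α × β, G p = ∑ i, (A i).indicator (fun _ => h i p.2) p.1

lemma isPC_of_fintype {ν : Measure β} {ι : Type*} [Fintype ι] (A : ι → Set α) (h : ι → β → ℝ)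
    (hA : ∀ i, MeasurableSet (A i)) (hdis : Pairwise (Disjoint on A))
    (hcov : (⋃ i, A i) = Set.univ) (hm : ∀ i, Measurable (h i))
    (hint : ∀ i, Integrable (h i) ν) (G : α × β → ℝ)
    (hG : ∀ p : α × β, G p = ∑ i, (A i).indicator (fun _ => h i p.2) p.1) :
    IsPC ν G := by
  let e := Fintype.equivFin ι
  refine ⟨Fintype.card ι, A ∘ e.symm, h ∘ e.symm, fun i => hA _,
    fun i j hij => hdis (e.symm.injective.ne hij), ?_, fun i => hm _, fun i => hint _, ?_⟩
  · rw [show (⋃ i, (A ∘ e.symm) i) = ⋃ i, A (e.symm i) from rfl,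
      e.symm.surjective.iUnion_comp (fun i => A i)]; exact hcov
  · intro p
    rw [hG p]
    exact (Equiv.sum_comp e.symm fun i => (A i).indicator (fun _ => h i p.2) p.1).symm

lemma IsPC.integrable {μ : Measure α} {ν : Measure β} [IsFiniteMeasure μ] [IsFiniteMeasure ν]
    {G : α × β → ℝ} (hG : IsPC ν G) : Integrable G (μ.prod ν) := by
  obtain ⟨n, A, h, hA, hdis, hcov, hm, hint, hGe⟩ := hG
  have : ∀ i : Fin n, Integrable (fun p : α × β => (A i).indicator (fun _ => h i p.2) p.1)
      (μ.prod ν) := by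
    intro i
    have h1 : Integrable (fun p : α × β => (1 : ℝ) * h i p.2) (μ.prod ν) :=
      (integrable_const (1 : ℝ)).mul_prod (hint i)
    have h2 : Integrable (fun p : α × β => h i p.2) (μ.prod ν) := by simpa using h1
    have h3 := h2.indicator ((hA i).prod MeasurableSet.univ)
    refine h3.congr (Filter.Eventually.of_forall fun p => ?_)
    by_cases hp : p.1 ∈ A i
    · simp [Set.indicator_apply, hp]
    · simp [Set.indicator_apply, hp]
  have hsum := MeasureTheory.integrable_finset_sum Finset.univ fun i _ => this i
  refine hsum.congr (Filter.Eventually.of_forall fun p => ?_)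
  rw [hGe p]

lemma IsPC.add {ν : Measure β} {G₁ G₂ : α × β → ℝ}
    (h₁ : IsPC ν G₁) (h₂ : IsPC ν G₂) : IsPC (α := α) ν (G₁ + G₂) := by
  obtain ⟨n, A, h, hA, hdis, hcov, hm, hint, hGe⟩ := h₁
  obtain ⟨m, A', h', hA', hdis', hcov', hm', hint', hGe'⟩ := h₂
  have hdis'' : Pairwise (Disjoint on fun ij : Fin n × Fin m => A ij.1 ∩ A' ij.2) := by
    rintro ⟨i, j⟩ ⟨k, l⟩ hne
    rcases eq_or_ne i k with rfl | hik
    · have hjl : j ≠ l := fun hh => hne (by simp [hh])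
      exact ((hdis' hjl).mono inf_le_right inf_le_right : _)
    · exact ((hdis hik).mono inf_le_left inf_le_left : _)
  have hcov'' : (⋃ ij : Fin n × Fin m, A ij.1 ∩ A' ij.2) = Set.univ := by
    ext x
    obtain ⟨i₀, hx⟩ := exists_mem_part hcov x
    obtain ⟨j₀, hx'⟩ := exists_mem_part hcov' x
    simp only [Set.mem_iUnion, Set.mem_univ, iff_true]
    exact ⟨⟨i₀, j₀⟩, hx, hx'⟩
  refine isPC_of_fintype (fun ij : Fin n × Fin m => A ij.1 ∩ A' ij.2)
    (fun ij => h ij.1 + h' ij.2) (fun ij => (hA ij.1).inter (hA' ij.2)) hdis'' hcov''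
    (fun ij => (hm ij.1).add (hm' ij.2)) (fun ij => (hint ij.1).add (hint' ij.2)) _ ?_
  intro ⟨x, y⟩
  obtain ⟨i₀, hx⟩ := exists_mem_part hcov x
  obtain ⟨j₀, hx'⟩ := exists_mem_part hcov' x
  have hx'' : x ∈ A i₀ ∩ A' j₀ := ⟨hx, hx'⟩
  rw [Pi.add_apply, hGe (x, y), hGe' (x, y),
    sum_indicator_part hdis hx (fun i => h i y),
    sum_indicator_part hdis' hx' (fun j => h' j y),
    sum_indicator_part hdis'' (i₀ := (i₀, j₀)) hx'' (fun ij => (h ij.1 + h' ij.2) y)]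
  rfl

lemma integral_abs_indicator_sub {γ : Type*} [MeasurableSpace γ] (m : Measure γ)
    [IsFiniteMeasure m] {S T : Set γ} (hS : MeasurableSet S) (hT : MeasurableSet T) (c : ℝ) :
    ∫ p, |S.indicator (fun _ => c) p - T.indicator (fun _ => c) p| ∂m
      = |c| * (m (symmDiff S T)).toReal := by
  have hpt : (fun p => |S.indicator (fun _ => c) p - T.indicator (fun _ => c) p|)
      = (symmDiff S T).indicator (fun _ => |c|) := by
    funext p
    by_cases hS' : p ∈ S <;> by_cases hT' : p ∈ T <;>
      simp [Set.indicator_apply, hS', hT', Set.mem_symmDiff, abs_of_nonneg]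
  rw [hpt, integral_indicator_const _ (hS.symmDiff hT), smul_eq_mul, mul_comm, measureReal_def]

end PC
section Approx

variable {α β : Type*} [MeasurableSpace α] [MeasurableSpace β]
variable (μ : Measure α) (ν : Measure β) [IsFiniteMeasure μ] [IsFiniteMeasure ν]

lemma simpleFunc_isPC_approx (s : SimpleFunc (α × β) ℝ) :
    ∀ δ : ℝ, 0 < δ → ∃ G, IsPC (α := α) ν G ∧ ∫ p, |s p - G p| ∂(μ.prod ν) < δ := by
  induction s using SimpleFunc.induction with
  | @const c S hS =>
    intro δ hδ
    have hc1 : (0 : ℝ) < |c| + 1 := by positivity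
    obtain ⟨T, hT, hTlt⟩ := xSet_approx μ ν hS (div_pos hδ hc1)
    obtain ⟨n, A, B, hA, hB, hdis, hcov, rfl⟩ := hT
    set G : α × β → ℝ :=
      fun p => ∑ i, (A i).indicator (fun _ => (B i).indicator (fun _ => c) p.2) p.1 with hGdef
    have hTmeas : MeasurableSet (⋃ i, (A i) ×ˢ (B i)) :=
      MeasurableSet.iUnion fun i => (hA i).prod (hB i)
    have hGind : ∀ p : α × β, G p = (⋃ i, (A i) ×ˢ (B i)).indicator (fun _ => c) p := by
      rintro ⟨x, y⟩
      obtain ⟨i₀, hx⟩ := exists_mem_part hcov x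
      rw [hGdef]
      simp only
      rw [sum_indicator_part hdis hx (fun i => (B i).indicator (fun _ => c) y)]
      by_cases hy : y ∈ B i₀
      · rw [Set.indicator_of_mem hy, Set.indicator_of_mem ((mem_iUnion_prod_iff
          (B := B) hdis hx).2 hy)]
      · rw [Set.indicator_of_notMem hy, Set.indicator_of_notMem
          (fun hq => hy ((mem_iUnion_prod_iff (B := B) hdis hx).1 hq))]
    refine ⟨G, ⟨n, A, fun i => (B i).indicator (fun _ => c), hA, hdis, hcov,
      fun i => (measurable_const.indicator (hB i)), fun i =>
        (integrable_const c).indicator (hB i), fun p => rfl⟩, ?_⟩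
    have hcoe : ∀ p : α × β,
        (SimpleFunc.piecewise S hS (SimpleFunc.const _ c) (SimpleFunc.const _ 0)) p
          = S.indicator (fun _ => c) p := by
      intro p
      by_cases hp : p ∈ S <;> simp [SimpleFunc.piecewise_apply, Set.indicator_apply, hp]
    calc ∫ p, |(SimpleFunc.piecewise S hS (SimpleFunc.const _ c) (SimpleFunc.const _ 0)) p
            - G p| ∂(μ.prod ν)
        = ∫ p, |S.indicator (fun _ => c) p
            - (⋃ i, (A i) ×ˢ (B i)).indicator (fun _ => c) p| ∂(μ.prod ν) := by
          congr 1; funext p; rw [hcoe p, hGind p]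
      _ = |c| * ((μ.prod ν) (symmDiff S (⋃ i, (A i) ×ˢ (B i)))).toReal :=
          integral_abs_indicator_sub _ hS hTmeas c
      _ ≤ (|c| + 1) * ((μ.prod ν) (symmDiff S (⋃ i, (A i) ×ˢ (B i)))).toReal := by
          apply mul_le_mul_of_nonneg_right (by linarith) ENNReal.toReal_nonneg
      _ < (|c| + 1) * (δ / (|c| + 1)) := by
          exact mul_lt_mul_of_pos_left hTlt hc1
      _ = δ := mul_div_cancel₀ δ (ne_of_gt hc1)
  | @add s₁ s₂ hdisj h₁ h₂ =>
    intro δ hδ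
    obtain ⟨G₁, hG₁, hG₁lt⟩ := h₁ (δ / 2) (by positivity)
    obtain ⟨G₂, hG₂, hG₂lt⟩ := h₂ (δ / 2) (by positivity)
    refine ⟨G₁ + G₂, hG₁.add hG₂, ?_⟩
    have hi₁ : Integrable (fun p => |s₁ p - G₁ p|) (μ.prod ν) :=
      ((s₁.integrable_of_isFiniteMeasure).sub hG₁.integrable).abs
    have hi₂ : Integrable (fun p => |s₂ p - G₂ p|) (μ.prod ν) :=
      ((s₂.integrable_of_isFiniteMeasure).sub hG₂.integrable).abs
    have hile : Integrable (fun p => |(s₁ + s₂) p - (G₁ + G₂) p|) (μ.prod ν) :=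
      (((s₁ + s₂).integrable_of_isFiniteMeasure).sub
        (hG₁.integrable.add hG₂.integrable)).abs
    calc ∫ p, |(s₁ + s₂) p - (G₁ + G₂) p| ∂(μ.prod ν)
        ≤ ∫ p, (|s₁ p - G₁ p| + |s₂ p - G₂ p|) ∂(μ.prod ν) := by
          refine integral_mono hile (hi₁.add hi₂) fun p => ?_
          simp only [SimpleFunc.coe_add, Pi.add_apply]
          calc |s₁ p + s₂ p - (G₁ p + G₂ p)| = |(s₁ p - G₁ p) + (s₂ p - G₂ p)| := by ring_nf
            _ ≤ |s₁ p - G₁ p| + |s₂ p - G₂ p| := abs_add_le _ _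
      _ = ∫ p, |s₁ p - G₁ p| ∂(μ.prod ν) + ∫ p, |s₂ p - G₂ p| ∂(μ.prod ν) :=
          integral_add hi₁ hi₂
      _ < δ / 2 + δ / 2 := add_lt_add hG₁lt hG₂lt
      _ = δ := by ring

lemma exists_isPC_approx {f : α × β → ℝ} (hf : Integrable f (μ.prod ν))
    {ε : ℝ} (hε : 0 < ε) :
    ∃ G, IsPC (α := α) ν G ∧ ∫ p, |f p - G p| ∂(μ.prod ν) < ε := by
  have hmem : MemLp f 1 (μ.prod ν) := memLp_one_iff_integrable.2 hf
  obtain ⟨s, hs, hsmem⟩ := hmem.exists_simpleFunc_eLpNorm_sub_lt (ENNReal.one_ne_top)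
    (ε := ENNReal.ofReal (ε / 2)) ((ENNReal.ofReal_pos.2 (half_pos hε)).ne')
  have hfs : ∫ p, |f p - s p| ∂(μ.prod ν) < ε / 2 := by
    have h1 : ∫ p, |f p - s p| ∂(μ.prod ν) = ∫ p, ‖(f - ⇑s) p‖ ∂(μ.prod ν) := by
      congr 1
    have h2 := integral_norm_eq_lintegral_enorm
      (f := f - ⇑s) (μ := μ.prod ν)
      ((hf.sub (s.integrable_of_isFiniteMeasure)).aestronglyMeasurable)
    rw [h1, h2, ← eLpNorm_one_eq_lintegral_enorm]
    exact ENNReal.toReal_lt_of_lt_ofReal hs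
  obtain ⟨G, hG, hGlt⟩ := simpleFunc_isPC_approx μ ν s (ε / 2) (half_pos hε)
  refine ⟨G, hG, ?_⟩
  have hi₁ : Integrable (fun p => |f p - s p|) (μ.prod ν) :=
    (hf.sub (s.integrable_of_isFiniteMeasure)).abs
  have hi₂ : Integrable (fun p => |s p - G p|) (μ.prod ν) :=
    ((s.integrable_of_isFiniteMeasure).sub hG.integrable).abs
  calc ∫ p, |f p - G p| ∂(μ.prod ν)
      ≤ ∫ p, (|f p - s p| + |s p - G p|) ∂(μ.prod ν) := by
        refine integral_mono ((hf.sub hG.integrable).abs) (hi₁.add hi₂) fun p => ?_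
        calc |f p - G p| = |(f p - s p) + (s p - G p)| := by ring_nf
          _ ≤ |f p - s p| + |s p - G p| := abs_add_le _ _
    _ = ∫ p, |f p - s p| ∂(μ.prod ν) + ∫ p, |s p - G p| ∂(μ.prod ν) := integral_add hi₁ hi₂
    _ < ε / 2 + ε / 2 := add_lt_add hfs hGlt
    _ = ε := by ring

end Approx
section Main

variable {α β : Type*} [MeasurableSpace α] [MeasurableSpace β]
variable (μ : Measure α) (ν : Measure β) [IsFiniteMeasure μ] [IsFiniteMeasure ν]

/-- Fubini for integrals over a vertical strip. -/
lemma setIntegral_strip {Ξ : α × β → ℝ} (hΞ : Integrable Ξ (μ.prod ν)) (A : Set α) :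
    ∫ p in A ×ˢ Set.univ, Ξ p ∂(μ.prod ν) = ∫ x in A, (∫ y, Ξ (x, y) ∂ν) ∂μ := by
  rw [← Measure.restrict_prod_eq_prod_univ]
  refine integral_prod _ ?_
  rw [Measure.restrict_prod_eq_prod_univ]
  exact hΞ.integrableOn

end Main
/-- Deterministic approximation core of Theorem 2 (large support): any joint probability
density `f` on `α × β` can be approximated arbitrarily well, in the `f_X`-weighted
integrated `L¹` sense, by a conditional density that is piecewise constant in the first
coordinate over a finite measurable partition of `α`. -/
theorem stmt0 {α β : Type*} [MeasurableSpace α] [MeasurableSpace β]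
    (μ : Measure α) (ν : Measure β) [IsFiniteMeasure μ] [IsFiniteMeasure ν]
    (hμ : μ ≠ 0) (hν : ν ≠ 0)
    (f : α × β → ℝ) (hf_meas : Measurable f) (hf_nonneg : ∀ p, 0 ≤ f p)
    (hf_int : ∫ p, f p ∂(μ.prod ν) = 1)
    (fX : α → ℝ) (hfX : ∀ x, fX x = ∫ y, f (x, y) ∂ν)
    (τ : ℝ) (hτ : 0 < τ) :
    ∃ (K : ℕ) (A : Fin K → Set α) (q : Fin K → β → ℝ),
      (∀ i, MeasurableSet (A i)) ∧
      (Pairwise fun i j => Disjoint (A i) (A j)) ∧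
      (⋃ i, A i) = Set.univ ∧
      (∀ i, Measurable (q i)) ∧
      (∀ i y, 0 ≤ q i y) ∧
      (∀ i, ∫ y, q i y ∂ν = 1) ∧
      ∫ p, |(∑ i, Set.indicator (A i) (fun _ => q i p.2) p.1) * fX p.1 - f p|
          ∂(μ.prod ν) < τ := by
  set m := μ.prod ν with hm
  -- f is integrable
  have hfint : Integrable f m := by
    by_contra hni
    rw [integral_undef hni] at hf_int
    norm_num at hf_int
  -- facts about fX
  have hfXint : Integrable fX μ := by
    have := hfint.integral_prod_left
    refine this.congr (Filter.Eventually.of_forall fun x => (hfX x).symm)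
  have hfX0 : ∀ x, 0 ≤ fX x := fun x => by
    rw [hfX x]; exact integral_nonneg fun y => hf_nonneg _
  -- the uniform density on β
  have hν0 : 0 < (ν Set.univ).toReal :=
    ENNReal.toReal_pos (Measure.measure_univ_ne_zero.2 hν) (measure_ne_top _ _)
  set q0 : β → ℝ := fun _ => ((ν Set.univ).toReal)⁻¹ with hq0def
  have hq0int : ∫ y, q0 y ∂ν = 1 := by
    rw [hq0def, integral_const, smul_eq_mul, measureReal_def, mul_inv_cancel₀ (ne_of_gt hν0)]
  -- get a piecewise-constant approximation of f
  obtain ⟨G, hGpc, hfG⟩ := exists_isPC_approx μ ν hfint (half_pos hτ)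
  obtain ⟨n, A, h0, hA, hdis, hcov, hm0, hint0, hGe⟩ := hGpc
  -- replace h0 by its nonnegative part
  set h : Fin n → β → ℝ := fun i y => max (h0 i y) 0 with hhdef
  have hmeas : ∀ i, Measurable (h i) := fun i => (hm0 i).max measurable_const
  have hint : ∀ i, Integrable (h i) ν := fun i => (hint0 i).pos_part
  have hnn : ∀ i y, 0 ≤ h i y := fun i y => le_max_right _ _
  set G' : α × β → ℝ := fun p => ∑ i, (A i).indicator (fun _ => h i p.2) p.1 with hG'def
  have hG'pc : IsPC (α := α) ν G' := ⟨n, A, h, hA, hdis, hcov, hmeas, hint, fun _ => rfl⟩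
  have hG'int : Integrable G' m := hG'pc.integrable
  have hGint : Integrable G m := by
    have hGpc2 : IsPC (α := α) ν G := ⟨n, A, h0, hA, hdis, hcov, hm0, hint0, hGe⟩
    exact hGpc2.integrable
  have hfG' : ∫ p, |f p - G' p| ∂m < τ / 2 := by
    refine lt_of_le_of_lt ?_ hfG
    refine integral_mono ((hfint.sub hG'int).abs) ((hfint.sub hGint).abs) fun p => ?_
    obtain ⟨x, y⟩ := p
    obtain ⟨i₀, hx⟩ := exists_mem_part hcov x
    have e1 : G' (x, y) = max (G (x, y)) 0 := by
      rw [hG'def, hGe (x, y)]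
      simp only
      rw [sum_indicator_part hdis hx (fun i => h i y),
        sum_indicator_part hdis hx (fun i => h0 i y)]
    rw [e1]
    rcases le_or_gt 0 (G (x, y)) with hb | hb
    · rw [max_eq_left hb]
    · rw [max_eq_right hb.le, sub_zero, abs_of_nonneg (hf_nonneg (x, y)),
        abs_of_nonneg (by linarith [hf_nonneg (x, y)])]
      linarith
  -- the conditional densities
  set c : Fin n → ℝ := fun i => ∫ y, h i y ∂ν with hcdef
  have hc0 : ∀ i, 0 ≤ c i := fun i => integral_nonneg fun y => hnn i y
  set q : Fin n → β → ℝ := fun i => if c i = 0 then q0 else fun y => h i y / c i with hqdef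
  have hqmeas : ∀ i, Measurable (q i) := by
    intro i
    simp only [hqdef]
    split_ifs
    · exact measurable_const
    · exact (hmeas i).div_const _
  have hqnn : ∀ i y, 0 ≤ q i y := by
    intro i y
    simp only [hqdef]
    split_ifs
    · exact inv_nonneg.2 ENNReal.toReal_nonneg
    · exact div_nonneg (hnn i y) (hc0 i)
  have hqint : ∀ i, Integrable (q i) ν := by
    intro i
    simp only [hqdef]
    split_ifs
    · exact integrable_const _
    · exact (hint i).div_const _
  have hq1 : ∀ i, ∫ y, q i y ∂ν = 1 := by
    intro i
    simp only [hqdef]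
    split_ifs with hci
    · exact hq0int
    · rw [integral_div, div_eq_one_iff_eq hci]
  -- the candidate conditional density, multiplied by the marginal
  set F : α × β → ℝ :=
    fun p => (∑ i, Set.indicator (A i) (fun _ => q i p.2) p.1) * fX p.1 with hFdef
  refine ⟨n, A, q, hA, hdis, hcov, hqmeas, hqnn, hq1, ?_⟩
  -- integrability of the pieces of F
  have hFi : ∀ i, Integrable (fun p : α × β => q i p.2 * fX p.1) m := by
    intro i
    have := hfXint.mul_prod (hqint i)
    exact this.congr (Filter.Eventually.of_forall fun p => mul_comm _ _)
  have hFint : Integrable F m := by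
    have hterm : ∀ i : Fin n, Integrable
        (fun p : α × β => ((A i) ×ˢ (Set.univ : Set β)).indicator
          (fun p : α × β => q i p.2 * fX p.1) p) m :=
      fun i => (hFi i).indicator ((hA i).prod MeasurableSet.univ)
    have hsum := MeasureTheory.integrable_finset_sum Finset.univ fun i _ => hterm i
    refine hsum.congr (Filter.Eventually.of_forall fun p => ?_)
    rw [hFdef]
    simp only
    rw [Finset.sum_mul]
    refine Finset.sum_congr rfl fun i _ => ?_
    by_cases hp : p.1 ∈ A i
    · rw [Set.indicator_of_mem (Set.mem_prod.2 ⟨hp, Set.mem_univ _⟩),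
        Set.indicator_of_mem hp]
    · rw [Set.indicator_of_notMem (fun hq' => hp (Set.mem_prod.1 hq').1),
        Set.indicator_of_notMem hp, zero_mul]
  -- the strips
  have hstripm : ∀ i : Fin n, MeasurableSet ((A i) ×ˢ (Set.univ : Set β)) :=
    fun i => (hA i).prod MeasurableSet.univ
  have hstripcov : (⋃ i, (A i) ×ˢ (Set.univ : Set β)) = Set.univ := by
    rw [← Set.iUnion_prod_const, hcov, Set.univ_prod_univ]
  have hstripdis : Pairwise (Disjoint on fun i => (A i) ×ˢ (Set.univ : Set β)) :=
    fun i j hij => Set.disjoint_prod.2 (Or.inl (hdis hij))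
  have hsum_eq : ∀ (Ξ : α × β → ℝ), Integrable Ξ m →
      ∫ p, Ξ p ∂m = ∑ i, ∫ p in (A i) ×ˢ (Set.univ : Set β), Ξ p ∂m := by
    intro Ξ hΞ
    rw [← integral_iUnion_fintype hstripm hstripdis fun i => hΞ.integrableOn,
      hstripcov, Measure.restrict_univ]
  -- the key per-strip inequality
  have hkey : ∀ i : Fin n, ∫ p in (A i) ×ˢ (Set.univ : Set β), |F p - G' p| ∂m
      ≤ ∫ p in (A i) ×ˢ (Set.univ : Set β), |f p - G' p| ∂m := by
    intro i
    have hhsnd : Integrable (fun p : α × β => h i p.2) m := by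
      have h1 : Integrable (fun p : α × β => (1 : ℝ) * h i p.2) (μ.prod ν) :=
        (integrable_const (1 : ℝ)).mul_prod (hint i)
      simpa using h1
    have hΦint : Integrable (fun p : α × β => |q i p.2 * fX p.1 - h i p.2|) m :=
      ((hFi i).sub hhsnd).abs
    have hDint : Integrable (fun p : α × β => |f p - h i p.2|) m := (hfint.sub hhsnd).abs
    have hstripF : Set.EqOn (fun p : α × β => |F p - G' p|)
        (fun p : α × β => |q i p.2 * fX p.1 - h i p.2|) ((A i) ×ˢ (Set.univ : Set β)) := by
      rintro ⟨x, y⟩ hp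
      have hx : x ∈ A i := hp.1
      simp only [hFdef, hG'def]
      rw [sum_indicator_part hdis hx (fun j => q j y),
        sum_indicator_part hdis hx (fun j => h j y)]
    have hstripf : Set.EqOn (fun p : α × β => |f p - G' p|)
        (fun p : α × β => |f p - h i p.2|) ((A i) ×ˢ (Set.univ : Set β)) := by
      rintro ⟨x, y⟩ hp
      have hx : x ∈ A i := hp.1
      simp only [hG'def]
      rw [sum_indicator_part hdis hx (fun j => h j y)]
    rw [setIntegral_congr_fun (hstripm i) hstripF, setIntegral_congr_fun (hstripm i) hstripf,
      hm, setIntegral_strip μ ν hΦint, setIntegral_strip μ ν hDint]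
    -- the RHS integrand, as an integrable function of x
    have hRHSint : Integrable (fun x => ∫ y, |f (x, y) - h i y| ∂ν) μ := by
      have := (hfint.sub hhsnd).integral_norm_prod_left
      refine this.congr (Filter.Eventually.of_forall fun x => ?_)
      simp [Real.norm_eq_abs]
    by_cases hci : c i = 0
    · -- the degenerate piece: `h i` vanishes a.e.
      have hci' : ∫ y, h i y ∂ν = 0 := hci
      have hzero : h i =ᵐ[ν] 0 :=
        (integral_eq_zero_iff_of_nonneg (fun y => hnn i y) (hint i)).1 hci'
      have hqi : q i = q0 := by simp only [hqdef]; rw [if_pos hci]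
      have hinner : ∀ x, ∫ y, |q i y * fX x - h i y| ∂ν = fX x := by
        intro x
        have hcong : (fun y => |q i y * fX x - h i y|) =ᵐ[ν] fun y => q0 y * fX x := by
          filter_upwards [hzero] with y hy
          rw [hqi, hy, Pi.zero_apply, sub_zero,
            abs_of_nonneg (mul_nonneg (inv_nonneg.2 ENNReal.toReal_nonneg) (hfX0 x))]
        rw [integral_congr_ae hcong, integral_mul_const, hq0int, one_mul]
      rw [show (fun x => ∫ y, |q i y * fX x - h i y| ∂ν) = fX from funext hinner]
      have hae : ∀ᵐ x ∂μ, fX x ≤ ∫ y, |f (x, y) - h i y| ∂ν := by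
        filter_upwards [hfint.prod_right_ae] with x hx
        have e3 : fX x = ∫ y, (f (x, y) - h i y) ∂ν := by
          rw [hfX x]
          refine integral_congr_ae ?_
          filter_upwards [hzero] with y hy
          rw [hy, Pi.zero_apply, sub_zero]
        rw [e3]
        exact le_trans (le_abs_self _) (by
          simpa [Real.norm_eq_abs] using
            norm_integral_le_integral_norm (fun y => f (x, y) - h i y) (μ := ν))
      exact integral_mono_ae hfXint.integrableOn hRHSint.integrableOn
        (ae_restrict_of_ae hae)
    · have hcpos : 0 < c i := (hc0 i).lt_of_ne (Ne.symm hci)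
      have hqi : q i = fun y => h i y / c i := by simp only [hqdef]; rw [if_neg hci]
      have hinner : ∀ x, ∫ y, |q i y * fX x - h i y| ∂ν = |fX x - c i| := by
        intro x
        have hpt : ∀ y, |q i y * fX x - h i y| = h i y * (|fX x - c i| / c i) := by
          intro y
          rw [hqi]
          have e : h i y / c i * fX x - h i y = h i y * ((fX x - c i) / c i) := by
            field_simp
          rw [e, abs_mul, abs_of_nonneg (hnn i y), abs_div, abs_of_pos hcpos]
        rw [show (fun y => |q i y * fX x - h i y|)
            = fun y => h i y * (|fX x - c i| / c i) from funext hpt, integral_mul_const]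
        have hcc : ∫ y, h i y ∂ν = c i := rfl
        rw [hcc]
        field_simp
      rw [show (fun x => ∫ y, |q i y * fX x - h i y| ∂ν)
          = fun x => |fX x - c i| from funext hinner]
      have hae : ∀ᵐ x ∂μ, |fX x - c i| ≤ ∫ y, |f (x, y) - h i y| ∂ν := by
        filter_upwards [hfint.prod_right_ae] with x hx
        have e3 : fX x - c i = ∫ y, (f (x, y) - h i y) ∂ν := by
          have hcc : c i = ∫ y, h i y ∂ν := rfl
          rw [hcc, hfX x]
          exact (integral_sub hx (hint i)).symm
        rw [e3]
        simpa [Real.norm_eq_abs] using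
          norm_integral_le_integral_norm (fun y => f (x, y) - h i y) (μ := ν)
      exact integral_mono_ae ((hfXint.sub (integrable_const (c i))).abs).integrableOn
        hRHSint.integrableOn (ae_restrict_of_ae hae)

  -- summation
  have hFG' : ∫ p, |F p - G' p| ∂m ≤ ∫ p, |f p - G' p| ∂m := by
    rw [hsum_eq (fun p => |F p - G' p|) (by exact (hFint.sub hG'int).abs),
      hsum_eq (fun p => |f p - G' p|) (by exact (hfint.sub hG'int).abs)]
    exact Finset.sum_le_sum fun i _ => hkey i
  -- conclusion
  calc ∫ p, |F p - f p| ∂m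
      ≤ ∫ p, (|F p - G' p| + |f p - G' p|) ∂m := by
        refine integral_mono ((hFint.sub hfint).abs)
          (((hFint.sub hG'int).abs).add ((hfint.sub hG'int).abs)) fun p => ?_
        calc |F p - f p| = |(F p - G' p) - (f p - G' p)| := by ring_nf
          _ ≤ |F p - G' p| + |f p - G' p| := abs_sub _ _
    _ = ∫ p, |F p - G' p| ∂m + ∫ p, |f p - G' p| ∂m :=
        integral_add ((hFint.sub hG'int).abs) ((hfint.sub hG'int).abs)
    _ ≤ ∫ p, |f p - G' p| ∂m + ∫ p, |f p - G' p| ∂m := by linarith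
    _ < τ / 2 + τ / 2 := by linarith
    _ = τ := by ring
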